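/- Let u : ℝⁿ × [0,∞) → ℝ be continuous and satisfy u ≥ c₀ on ℝⁿ × [0,∞) for some constant c₀ > 0, and fix λ ∈ (0,1). Then u_{q,λ} converges to u_{⋆,λ} uniformly on every compact subset of ℝⁿ × [0,∞) as q → ∞. -/
import Mathlib


open Filter Topology

/-- The spatially quasiconvex envelope `u_{⋆,λ}` of `u`. -/
noncomputable def qcEnv {n : ℕ} (lam : ℝ) (u : EuclideanSpace ℝ (Fin n) → ℝ → ℝ)
    (x : EuclideanSpace ℝ (Fin n)) (t : ℝ) : ℝ :=
  sInf {m : ℝ | ∃ y z : EuclideanSpace ℝ (Fin n),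
    lam • y + (1 - lam) • z = x ∧ m = max (u y t) (u z t)}

/-- The spatially power convex envelope `u_{q,λ}` of `u`. -/
noncomputable def pcEnv {n : ℕ} (lam q : ℝ) (u : EuclideanSpace ℝ (Fin n) → ℝ → ℝ)
    (x : EuclideanSpace ℝ (Fin n)) (t : ℝ) : ℝ :=
  sInf {m : ℝ | ∃ y z : EuclideanSpace ℝ (Fin n),
    lam • y + (1 - lam) • z = x ∧
    m = (lam * (u y t) ^ q + (1 - lam) * (u z t) ^ q) ^ (1 / q)}

lemma envBounds {n : ℕ} (c₀ : ℝ) (hc₀ : 0 < c₀)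
    (u : EuclideanSpace ℝ (Fin n) → ℝ → ℝ)
    (hpos : ∀ x t, 0 ≤ t → c₀ ≤ u x t)
    (lam : ℝ) (hl0 : 0 < lam) (hl1 : lam < 1) (q : ℝ) (hq : 0 < q)
    (x : EuclideanSpace ℝ (Fin n)) (t : ℝ) (ht : 0 ≤ t) :
    (min lam (1 - lam)) ^ (1 / q) * qcEnv lam u x t ≤ pcEnv lam q u x t ∧
    pcEnv lam q u x t ≤ qcEnv lam u x t ∧
    0 ≤ qcEnv lam u x t ∧ qcEnv lam u x t ≤ u x t := by
  have hl1' : 0 < 1 - lam := by linarith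
  set m := min lam (1 - lam) with hmdef
  have hm0 : 0 < m := lt_min hl0 hl1'
  have hq' : (0:ℝ) ≤ 1 / q := by positivity
  have hcomb : lam • x + (1 - lam) • x = x := by
    rw [← add_smul]
    norm_num
  set A := {m : ℝ | ∃ y z : EuclideanSpace ℝ (Fin n),
    lam • y + (1 - lam) • z = x ∧ m = max (u y t) (u z t)} with hA
  set B := {m : ℝ | ∃ y z : EuclideanSpace ℝ (Fin n),
    lam • y + (1 - lam) • z = x ∧
    m = (lam * (u y t) ^ q + (1 - lam) * (u z t) ^ q) ^ (1 / q)} with hB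
  have hxA : max (u x t) (u x t) ∈ A := ⟨x, x, hcomb, rfl⟩
  have hAne : A.Nonempty := ⟨_, hxA⟩
  have hBne : B.Nonempty := ⟨_, x, x, hcomb, rfl⟩
  have hAbdd : BddBelow A := by
    refine ⟨c₀, fun a ha => ?_⟩
    obtain ⟨y, z, _, rfl⟩ := ha
    exact le_trans (hpos y t ht) (le_max_left _ _)
  have hBbdd : BddBelow B := by
    refine ⟨0, fun b hb => ?_⟩
    obtain ⟨y, z, _, rfl⟩ := hb
    refine Real.rpow_nonneg (add_nonneg (mul_nonneg hl0.le ?_) (mul_nonneg hl1'.le ?_)) _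
    · exact Real.rpow_nonneg (le_trans hc₀.le (hpos y t ht)) q
    · exact Real.rpow_nonneg (le_trans hc₀.le (hpos z t ht)) q
  -- the two key pointwise rpow inequalities
  have key : ∀ y z : EuclideanSpace ℝ (Fin n),
      m ^ (1/q) * max (u y t) (u z t)
        ≤ (lam * (u y t) ^ q + (1 - lam) * (u z t) ^ q) ^ (1 / q) ∧
      (lam * (u y t) ^ q + (1 - lam) * (u z t) ^ q) ^ (1 / q)
        ≤ max (u y t) (u z t) := by
    intro y z
    set a := u y t
    set b := u z t
    have ha : 0 < a := lt_of_lt_of_le hc₀ (hpos y t ht)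
    have hb : 0 < b := lt_of_lt_of_le hc₀ (hpos z t ht)
    have hmax : 0 < max a b := lt_max_of_lt_left ha
    have haq : (0:ℝ) ≤ a ^ q := Real.rpow_nonneg ha.le q
    have hbq : (0:ℝ) ≤ b ^ q := Real.rpow_nonneg hb.le q
    have hMq : ((max a b) ^ q) ^ (1/q) = max a b := by
      rw [← Real.rpow_mul hmax.le, mul_one_div_cancel hq.ne', Real.rpow_one]
    constructor
    · have h2 : m * (max a b) ^ q ≤ lam * a ^ q + (1 - lam) * b ^ q := by
        rcases le_total a b with h | h
        · rw [max_eq_right h]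
          have : m ≤ 1 - lam := min_le_right _ _
          nlinarith
        · rw [max_eq_left h]
          have : m ≤ lam := min_le_left _ _
          nlinarith
      calc m ^ (1/q) * max a b = (m * (max a b) ^ q) ^ (1/q) := by
            rw [Real.mul_rpow hm0.le (Real.rpow_nonneg hmax.le q), hMq]
        _ ≤ (lam * a ^ q + (1 - lam) * b ^ q) ^ (1/q) :=
            Real.rpow_le_rpow (by positivity) h2 hq'
    · have h1 : lam * a ^ q + (1 - lam) * b ^ q ≤ (max a b) ^ q := by
        have hA' : a ^ q ≤ (max a b) ^ q :=
          Real.rpow_le_rpow ha.le (le_max_left _ _) hq.le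
        have hB' : b ^ q ≤ (max a b) ^ q :=
          Real.rpow_le_rpow hb.le (le_max_right _ _) hq.le
        nlinarith
      calc (lam * a ^ q + (1 - lam) * b ^ q) ^ (1/q)
            ≤ ((max a b) ^ q) ^ (1/q) := Real.rpow_le_rpow (by positivity) h1 hq'
        _ = max a b := hMq
  have hqc_nonneg : 0 ≤ qcEnv lam u x t := by
    refine le_csInf hAne fun a ha => ?_
    obtain ⟨y, z, _, rfl⟩ := ha
    exact le_trans (le_trans hc₀.le (hpos y t ht)) (le_max_left _ _)
  refine ⟨?_, ?_, hqc_nonneg, ?_⟩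
  · refine le_csInf hBne fun b hb => ?_
    obtain ⟨y, z, hc, rfl⟩ := hb
    have h1 : qcEnv lam u x t ≤ max (u y t) (u z t) := csInf_le hAbdd ⟨y, z, hc, rfl⟩
    calc m ^ (1/q) * qcEnv lam u x t ≤ m ^ (1/q) * max (u y t) (u z t) :=
          mul_le_mul_of_nonneg_left h1 (Real.rpow_nonneg hm0.le _)
      _ ≤ _ := (key y z).1
  · refine le_csInf hAne fun a ha => ?_
    obtain ⟨y, z, hc, rfl⟩ := ha
    exact le_trans (csInf_le hBbdd ⟨y, z, hc, rfl⟩) (key y z).2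
  · exact le_trans (csInf_le hAbdd hxA) (by simp)

/-- Proposition 4.1 of the paper: if `u` is continuous on `ℝⁿ × [0,∞)` and uniformly
positive, then `u_{q,λ} → u_{⋆,λ}` uniformly on every compact subset of `ℝⁿ × [0,∞)`
as `q → ∞`. -/
theorem stmt_5 {n : ℕ} (c₀ : ℝ) (hc₀ : 0 < c₀)
    (u : EuclideanSpace ℝ (Fin n) → ℝ → ℝ)
    (hu : ContinuousOn (fun p : EuclideanSpace ℝ (Fin n) × ℝ => u p.1 p.2)
      {p : EuclideanSpace ℝ (Fin n) × ℝ | 0 ≤ p.2})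
    (hpos : ∀ x t, 0 ≤ t → c₀ ≤ u x t)
    (lam : ℝ) (hlam : lam ∈ Set.Ioo (0 : ℝ) 1) :
    ∀ S : Set (EuclideanSpace ℝ (Fin n) × ℝ), IsCompact S →
      S ⊆ {p : EuclideanSpace ℝ (Fin n) × ℝ | 0 ≤ p.2} →
      TendstoUniformlyOn
        (fun (q : ℝ) (p : EuclideanSpace ℝ (Fin n) × ℝ) => pcEnv lam q u p.1 p.2)
        (fun p : EuclideanSpace ℝ (Fin n) × ℝ => qcEnv lam u p.1 p.2)
        Filter.atTop S := by

  intro S hS hsub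
  obtain ⟨hl0, hl1⟩ := hlam
  have hl1' : 0 < 1 - lam := by linarith
  set m := min lam (1 - lam) with hmdef
  have hm0 : 0 < m := lt_min hl0 hl1'
  have hm1 : m ≤ 1 := le_trans (min_le_left _ _) hl1.le
  obtain ⟨M, hM⟩ : ∃ M, ∀ p ∈ S, u p.1 p.2 ≤ M := by
    obtain ⟨M, hM⟩ := (hS.image_of_continuousOn (hu.mono hsub)).bddAbove
    exact ⟨M, fun p hp => hM ⟨p, hp, rfl⟩⟩
  set M1 := max M 1 with hM1def
  have hM1 : (0:ℝ) < M1 := lt_of_lt_of_le one_pos (le_max_right _ _)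
  rw [Metric.tendstoUniformlyOn_iff]
  intro ε hε
  have hlim : Tendsto (fun q : ℝ => M1 * (1 - m ^ (1 / q))) atTop (𝓝 0) := by
    have h0 : Tendsto (fun q : ℝ => Real.log m * (1 / q)) atTop (𝓝 (Real.log m * 0)) :=
      tendsto_const_nhds.mul ((tendsto_inv_atTop_zero : Tendsto (fun r : ℝ => r⁻¹) atTop (𝓝 0)).congr fun q => (one_div q).symm)
    rw [mul_zero] at h0
    have h1 : Tendsto (fun q : ℝ => m ^ (1 / q)) atTop (𝓝 1) := by
      have := (Real.continuous_exp.tendsto 0).comp h0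
      rw [Real.exp_zero] at this
      refine this.congr fun q => ?_
      simp [Function.comp, Real.rpow_def_of_pos hm0]
    have : Tendsto (fun q : ℝ => M1 * (1 - m ^ (1 / q))) atTop (𝓝 (M1 * (1 - 1))) :=
      tendsto_const_nhds.mul (tendsto_const_nhds.sub h1)
    simpa using this
  filter_upwards [hlim.eventually_lt_const hε, eventually_gt_atTop (0:ℝ)]
    with q h1 h2 p hp
  obtain ⟨k1, k2, k3, k4⟩ :=
    envBounds c₀ hc₀ u hpos lam hl0 hl1 q h2 p.1 p.2 (hsub hp)
  have hqcM1 : qcEnv lam u p.1 p.2 ≤ M1 :=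
    k4.trans ((hM p hp).trans (le_max_left _ _))
  have hmm : m ^ (1 / q) ≤ 1 := Real.rpow_le_one hm0.le hm1 (by positivity)
  rw [Real.dist_eq, abs_of_nonneg (by linarith)]
  nlinarith [mul_nonneg (sub_nonneg.2 hqcM1) (sub_nonneg.2 hmm)]
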